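/- Let a, b, c > 0 and let x, λ, μ : I → ℝ be differentiable on an open interval I with x(t) > 0, satisfying x' = −a x + (b + c x) u, λ' = a λ − 1 + u, μ' = (c μ − b λ) u for a function u : I → ℝ, and suppose the switching function σ := b λ − c μ − x vanishes identically on I. Then on all of I: (i) a b λ + a x = b, i.e. λ = (b − a x)/(a b); (ii) the singular control is u = 2 a x/(2b + c x); and (iii) x' = a c x²/(2b + c x) > 0, so x is strictly increasing on I. -/

import Mathlib

/-- If a function vanishes on an open set, any derivative it has at a point of the set is 0. -/
lemma deriv_zero_of_eq_zero_on {f : ℝ → ℝ} {I : Set ℝ} (hI : IsOpen I)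
    (hf0 : ∀ t ∈ I, f t = 0) {t d : ℝ} (ht : t ∈ I) (hd : HasDerivAt f d t) : d = 0 := by
  have h0 : HasDerivAt f 0 t := by
    have hev : f =ᶠ[nhds t] fun _ => (0 : ℝ) :=
      Filter.eventuallyEq_of_mem (hI.mem_nhds ht) hf0
    exact (hasDerivAt_const t (0 : ℝ)).congr_of_eventuallyEq hev
  exact hd.unique h0

/-- On a singular arc (where `σ = b λ - c μ - x` vanishes identically on an
open interval `I` with `x > 0`): (i) `a b λ + a x = b`, i.e. `λ = (b - a x)/(a b)`;
(ii) the singular control is `u = 2 a x/(2b + c x)`; (iii) `x' = a c x²/(2b + c x) > 0`,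
so `x` is strictly increasing on `I`. -/
theorem singular_arc_cooperative (a b c : ℝ) (ha : 0 < a) (hb : 0 < b) (hc : 0 < c)
    (I : Set ℝ) (hI_open : IsOpen I) (hI_conn : I.OrdConnected)
    (x lam mu u : ℝ → ℝ)
    (hx_pos : ∀ t ∈ I, 0 < x t)
    (hx : ∀ t ∈ I, HasDerivAt x (-a * x t + (b + c * x t) * u t) t)
    (hlam : ∀ t ∈ I, HasDerivAt lam (a * lam t - 1 + u t) t)
    (hmu : ∀ t ∈ I, HasDerivAt mu ((c * mu t - b * lam t) * u t) t)
    (hsig : ∀ t ∈ I, b * lam t - c * mu t - x t = 0) :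
    (∀ t ∈ I, a * b * lam t + a * x t = b ∧ lam t = (b - a * x t) / (a * b)) ∧
    (∀ t ∈ I, u t = 2 * a * x t / (2 * b + c * x t)) ∧
    (∀ t ∈ I, HasDerivAt x (a * c * (x t) ^ 2 / (2 * b + c * x t)) t ∧
      0 < a * c * (x t) ^ 2 / (2 * b + c * x t)) ∧
    StrictMonoOn x I := by
  have hpos2 : ∀ t ∈ I, (0:ℝ) < 2 * b + c * x t := fun t ht => by
    have := hx_pos t ht; nlinarith
  -- (i)
  have hi : ∀ t ∈ I, a * b * lam t + a * x t = b := by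
    intro t ht
    have hdσ : HasDerivAt (fun s => b * lam s - c * mu s - x s)
        (b * (a * lam t - 1 + u t) - c * ((c * mu t - b * lam t) * u t)
          - (-a * x t + (b + c * x t) * u t)) t :=
      (((hlam t ht).const_mul b).sub ((hmu t ht).const_mul c)).sub (hx t ht)
    have h0 := deriv_zero_of_eq_zero_on hI_open hsig ht hdσ
    linear_combination h0 - u t * c * hsig t ht
  -- (ii)
  have hii : ∀ t ∈ I, u t = 2 * a * x t / (2 * b + c * x t) := by
    intro t ht
    have hdφ : HasDerivAt (fun s => a * b * lam s + a * x s - b)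
        (a * b * (a * lam t - 1 + u t) + a * (-a * x t + (b + c * x t) * u t)) t := by
      have : HasDerivAt (fun s => a * b * lam s + a * x s)
          (a * b * (a * lam t - 1 + u t) + a * (-a * x t + (b + c * x t) * u t)) t :=
        ((hlam t ht).const_mul (a * b)).add ((hx t ht).const_mul a)
      simpa using this.sub_const b
    have h0 : ∀ s ∈ I, a * b * lam s + a * x s - b = 0 := fun s hs => by
      have := hi s hs; linarith
    have hd0 := deriv_zero_of_eq_zero_on hI_open h0 ht hdφ
    have h1 := hi t ht
    have h2 := hpos2 t ht
    rw [eq_div_iff h2.ne']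
    have key : a * (u t * (2 * b + c * x t) - 2 * a * x t) = 0 := by
      linear_combination hd0 - a * h1
    have := (mul_eq_zero.mp key).resolve_left ha.ne'
    linarith
  -- (iii)
  have hiii : ∀ t ∈ I, HasDerivAt x (a * c * (x t) ^ 2 / (2 * b + c * x t)) t ∧
      0 < a * c * (x t) ^ 2 / (2 * b + c * x t) := by
    intro t ht
    have h2 := hpos2 t ht
    have hxp := hx_pos t ht
    have heq : -a * x t + (b + c * x t) * u t = a * c * (x t) ^ 2 / (2 * b + c * x t) := by
      rw [hii t ht]; field_simp; ring
    refine ⟨heq ▸ hx t ht, by positivity⟩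
  refine ⟨fun t ht => ⟨hi t ht, ?_⟩, hii, hiii, ?_⟩
  · have h1 := hi t ht
    field_simp
    linarith
  · have hconv : Convex ℝ I := convex_iff_ordConnected.mpr hI_conn
    refine strictMonoOn_of_deriv_pos hconv (fun t ht => (hx t ht).continuousAt.continuousWithinAt)
      (fun t ht => ?_)
    rw [hI_open.interior_eq] at ht
    rw [(hiii t ht).1.deriv]
    exact (hiii t ht).2
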